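/- Let a ∈ ℝ and let w, c be real numbers with 0 < w < c. Let f₀ be the two-bump initial density with parameters a, c, w, and for y ≥ 0 define the kernel k(y) = ∫₀^{y/2} [ f₀(a−y+x) f₀(a+x) − f₀(a−y−x) f₀(a−x) ] dx. Then for every y ≥ 0 one has k(y) = (1/(4w)) · h_{2c,w}(y), i.e. the kernel is a positive multiple of the triangular hat function of height 1 centered at y = 2c with base half-width w. -/

import Mathlib

open MeasureTheory Set

/-- The triangular hat function `h_{p,w}(y) = max{1 - |y - p|/w, 0}`. -/
noncomputable def hat (p w y : ℝ) : ℝ := max (1 - |y - p| / w) 0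

/-- The two-bump initial density with parameters `a`, `c`, `w`. -/
noncomputable def twoBump (a c w x : ℝ) : ℝ :=
  (1 / (2 * w)) * ((Set.Ioo (a - c - w) (a - c)).indicator 1 x
    + (Set.Ioo (a + c - w) (a + c)).indicator 1 x)

theorem stmt0 (a w c : ℝ) (hw : 0 < w) (hwc : w < c) (y : ℝ) (hy : 0 ≤ y) :
    (∫ x in (0:ℝ)..(y / 2),
        (twoBump a c w (a - y + x) * twoBump a c w (a + x)
          - twoBump a c w (a - y - x) * twoBump a c w (a - x)))
      = (1 / (4 * w)) * hat (2 * c) w y := by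
  set l := max (y - c - w) (c - w) with hl
  set u := min (y - c) c with hu
  have hy2 : (0:ℝ) ≤ y / 2 := by linarith
  have key : EqOn (fun x => twoBump a c w (a - y + x) * twoBump a c w (a + x)
          - twoBump a c w (a - y - x) * twoBump a c w (a - x))
      (fun x => (1 / (4 * w ^ 2)) * (Ioo l u).indicator 1 x) (uIcc 0 (y / 2)) := by
    intro x hx
    rw [uIcc_of_le hy2] at hx
    obtain ⟨hx0, hxy⟩ := hx
    have e1 : twoBump a c w (a - y + x)
        = (1 / (2 * w)) * (Ioo (y - c - w) (y - c)).indicator 1 x := by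
      unfold twoBump
      have h2 : (Ioo (a + c - w) (a + c)).indicator (1 : ℝ → ℝ) (a - y + x) = 0 := by
        apply indicator_of_notMem
        rintro ⟨hm1, hm2⟩; linarith
      have h1 : (Ioo (a - c - w) (a - c)).indicator (1 : ℝ → ℝ) (a - y + x)
          = (Ioo (y - c - w) (y - c)).indicator 1 x := by
        by_cases h : x ∈ Ioo (y - c - w) (y - c)
        · rw [indicator_of_mem h]
          rw [indicator_of_mem (show a - y + x ∈ Ioo (a - c - w) (a - c) from
            ⟨by linarith [h.1], by linarith [h.2]⟩)]
          rfl
        · rw [indicator_of_notMem h]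
          apply indicator_of_notMem
          rintro ⟨hm1, hm2⟩; exact h ⟨by linarith, by linarith⟩
      rw [h1, h2]; ring
    have e2 : twoBump a c w (a + x)
        = (1 / (2 * w)) * (Ioo (c - w) c).indicator 1 x := by
      unfold twoBump
      have h2 : (Ioo (a - c - w) (a - c)).indicator (1 : ℝ → ℝ) (a + x) = 0 := by
        apply indicator_of_notMem
        rintro ⟨hm1, hm2⟩; linarith
      have h1 : (Ioo (a + c - w) (a + c)).indicator (1 : ℝ → ℝ) (a + x)
          = (Ioo (c - w) c).indicator 1 x := by
        by_cases h : x ∈ Ioo (c - w) c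
        · rw [indicator_of_mem h]
          rw [indicator_of_mem (show a + x ∈ Ioo (a + c - w) (a + c) from
            ⟨by linarith [h.1], by linarith [h.2]⟩)]
          rfl
        · rw [indicator_of_notMem h]
          apply indicator_of_notMem
          rintro ⟨hm1, hm2⟩; exact h ⟨by linarith, by linarith⟩
      rw [h1, h2]; ring
    have e3 : twoBump a c w (a - y - x)
        = (1 / (2 * w)) * (Ioo (c - y) (c + w - y)).indicator 1 x := by
      unfold twoBump
      have h2 : (Ioo (a + c - w) (a + c)).indicator (1 : ℝ → ℝ) (a - y - x) = 0 := by
        apply indicator_of_notMem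
        rintro ⟨hm1, hm2⟩; linarith
      have h1 : (Ioo (a - c - w) (a - c)).indicator (1 : ℝ → ℝ) (a - y - x)
          = (Ioo (c - y) (c + w - y)).indicator 1 x := by
        by_cases h : x ∈ Ioo (c - y) (c + w - y)
        · rw [indicator_of_mem h]
          rw [indicator_of_mem (show a - y - x ∈ Ioo (a - c - w) (a - c) from
            ⟨by linarith [h.2], by linarith [h.1]⟩)]
          rfl
        · rw [indicator_of_notMem h]
          apply indicator_of_notMem
          rintro ⟨hm1, hm2⟩; exact h ⟨by linarith, by linarith⟩
      rw [h1, h2]; ring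
    have e4 : twoBump a c w (a - x)
        = (1 / (2 * w)) * (Ioo c (c + w)).indicator 1 x := by
      unfold twoBump
      have h2 : (Ioo (a + c - w) (a + c)).indicator (1 : ℝ → ℝ) (a - x) = 0 := by
        apply indicator_of_notMem
        rintro ⟨hm1, hm2⟩; linarith
      have h1 : (Ioo (a - c - w) (a - c)).indicator (1 : ℝ → ℝ) (a - x)
          = (Ioo c (c + w)).indicator 1 x := by
        by_cases h : x ∈ Ioo c (c + w)
        · rw [indicator_of_mem h]
          rw [indicator_of_mem (show a - x ∈ Ioo (a - c - w) (a - c) from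
            ⟨by linarith [h.2], by linarith [h.1]⟩)]
          rfl
        · rw [indicator_of_notMem h]
          apply indicator_of_notMem
          rintro ⟨hm1, hm2⟩; exact h ⟨by linarith, by linarith⟩
      rw [h1, h2]; ring
    have e34 : (Ioo (c - y) (c + w - y)).indicator (1 : ℝ → ℝ) x
        * (Ioo c (c + w)).indicator (1 : ℝ → ℝ) x = 0 := by
      by_cases h : x ∈ Ioo c (c + w)
      · have : x ∉ Ioo (c - y) (c + w - y) := by
          rintro ⟨hm1, hm2⟩
          have := h.1
          linarith
        rw [indicator_of_notMem this, zero_mul]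
      · rw [indicator_of_notMem h, mul_zero]
    have e12 : (Ioo (y - c - w) (y - c)).indicator (1 : ℝ → ℝ) x
        * (Ioo (c - w) c).indicator (1 : ℝ → ℝ) x = (Ioo l u).indicator 1 x := by
      rw [hl, hu, ← Set.Ioo_inter_Ioo, Set.inter_indicator_one]
      rfl
    simp only [e1, e2, e3, e4]
    rw [show (1 / (2 * w)) * (Ioo (y - c - w) (y - c)).indicator (1 : ℝ → ℝ) x *
        ((1 / (2 * w)) * (Ioo (c - w) c).indicator (1 : ℝ → ℝ) x) -
        (1 / (2 * w)) * (Ioo (c - y) (c + w - y)).indicator (1 : ℝ → ℝ) x *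
        ((1 / (2 * w)) * (Ioo c (c + w)).indicator (1 : ℝ → ℝ) x)
      = (1 / (4 * w ^ 2)) * ((Ioo (y - c - w) (y - c)).indicator (1 : ℝ → ℝ) x *
          (Ioo (c - w) c).indicator (1 : ℝ → ℝ) x)
        - (1 / (4 * w ^ 2)) * ((Ioo (c - y) (c + w - y)).indicator (1 : ℝ → ℝ) x *
          (Ioo c (c + w)).indicator (1 : ℝ → ℝ) x) from by ring]
    rw [e12, e34]
    ring
  rw [intervalIntegral.integral_congr key]
  rw [intervalIntegral.integral_const_mul]
  rw [intervalIntegral.integral_of_le hy2]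
  rw [MeasureTheory.setIntegral_indicator measurableSet_Ioo]
  have hsub : Ioo l u ⊆ Ioc 0 (y / 2) := by
    rintro z ⟨h1, h2⟩
    have hlz : c - w ≤ l := le_max_right _ _
    have huz : u ≤ y / 2 := by
      rcases le_total (y - c) c with h | h
      · rw [hu, min_eq_left h]; linarith
      · rw [hu, min_eq_right h]; linarith
    exact ⟨by linarith, by linarith⟩
  rw [Set.inter_eq_self_of_subset_right hsub]
  simp only [Pi.one_apply]
  rw [MeasureTheory.setIntegral_const, measureReal_def, Real.volume_Ioo, smul_eq_mul, mul_one]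
  have habs : u - l = w - |y - 2 * c| := by
    have h1 : (y - c) ⊔ c - w = l := (max_sub_sub_right (y - c) c w).symm
    have h2 : (y - c) ⊔ c - u = |c - (y - c)| := by
      rw [hu]; exact max_sub_min_eq_abs (y - c) c
    have h3 : |c - (y - c)| = |y - 2 * c| := by
      rw [abs_sub_comm]; congr 1; ring
    rw [h3] at h2
    linarith
  rcases le_total (|y - 2 * c|) w with h | h
  · have hul : 0 ≤ u - l := by rw [habs]; linarith
    rw [ENNReal.toReal_ofReal hul, habs]
    have hhat : hat (2 * c) w y = 1 - |y - 2 * c| / w := by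
      unfold hat
      rw [max_eq_left]
      have : |y - 2 * c| / w ≤ 1 := by
        rw [div_le_one hw]; exact h
      linarith
    rw [hhat]
    have hwne : w ≠ 0 := ne_of_gt hw
    rw [show (1:ℝ) - |y - 2 * c| / w = (w - |y - 2 * c|) / w from by field_simp]
    rw [show (1:ℝ)/(4*w) * ((w - |y - 2*c|)/w) = (w - |y - 2*c|) / (4 * w^2) from by
      rw [div_mul_div_comm, one_mul]
      congr 1
      ring]
    ring
  · have hul : u - l ≤ 0 := by rw [habs]; linarith
    rw [ENNReal.ofReal_eq_zero.mpr hul, ENNReal.toReal_zero]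
    have hhat : hat (2 * c) w y = 0 := by
      unfold hat
      rw [max_eq_right]
      have : (1:ℝ) ≤ |y - 2 * c| / w := (one_le_div hw).mpr h
      linarith
    rw [hhat]
    ring
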